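/- Let 1 ≤ p < ∞ and 1 ≤ r ≤ ∞. If F : [0,∞) → [0,∞) is locally absolutely continuous with F ∈ L^p([0,∞); ℝ), G ∈ L^r([0,∞); ℝ), and (d/dt)F(t) ≤ G(t) for a.e. t ∈ [0,∞), then lim_{t→∞} F(t) = 0. -/

import Mathlib

open Set MeasureTheory Filter
open scoped ENNReal

/-- Tail of the integral of a nonnegative integrable function on `[0,∞)` is small far out. -/
private lemma tail_small_aux {f : ℝ → ℝ} (hf : IntegrableOn f (Ici 0))
    (hnn : ∀ x, 0 ≤ f x) {c : ℝ} (hc : 0 < c) (T₀ : ℝ) :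
    ∃ T : ℝ, T₀ ≤ T ∧ 0 ≤ T ∧ ∫ x in Ici T, f x < c := by
  have hU : ⋃ n : ℕ, Icc (0:ℝ) (n:ℝ) = Ici 0 := by
    ext x
    simp only [mem_iUnion, mem_Icc, mem_Ici]
    constructor
    · rintro ⟨n, h, _⟩; exact h
    · intro hx
      obtain ⟨n, hn⟩ := exists_nat_ge x
      exact ⟨n, hx, hn⟩
  have hmono : Monotone fun n : ℕ => Icc (0:ℝ) (n:ℝ) := fun m n hmn =>
    Icc_subset_Icc le_rfl (by exact_mod_cast hmn)
  have htend := tendsto_setIntegral_of_monotone (fun n : ℕ => measurableSet_Icc) hmono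
    (by rw [hU]; exact hf)
  rw [hU] at htend
  have htend2 : Tendsto (fun n : ℕ => (∫ x in Ici (0:ℝ), f x) - ∫ x in Icc (0:ℝ) (n:ℝ), f x)
      atTop (nhds ((∫ x in Ici (0:ℝ), f x) - ∫ x in Ici (0:ℝ), f x)) :=
    tendsto_const_nhds.sub htend
  rw [sub_self] at htend2
  have hev := htend2.eventually (gt_mem_nhds hc)
  obtain ⟨n, hn1, hn2⟩ := (hev.and (eventually_ge_atTop ⌈max T₀ 0⌉₊)).exists
  have hmax : max T₀ 0 ≤ (n : ℝ) := le_trans (Nat.le_ceil _) (by exact_mod_cast hn2)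
  have hn0 : (0:ℝ) ≤ (n:ℝ) := le_trans (le_max_right _ _) hmax
  refine ⟨n, le_trans (le_max_left _ _) hmax, hn0, ?_⟩
  have hsplit : (∫ x in Ici (0:ℝ), f x) =
      (∫ x in Icc (0:ℝ) (n:ℝ), f x) + ∫ x in Ioi (n:ℝ), f x := by
    rw [← setIntegral_union ((Set.Iic_disjoint_Ioi le_rfl).mono Set.Icc_subset_Iic_self le_rfl) measurableSet_Ioi
      (hf.mono_set Icc_subset_Ici_self) (hf.mono_set (fun x hx => le_trans hn0 (le_of_lt hx))),
      Icc_union_Ioi_eq_Ici hn0]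
  rw [integral_Ici_eq_integral_Ioi]
  linarith [hn1]

/-- If `1 ≤ p < ∞`, `1 ≤ r ≤ ∞`, `F : [0,∞) → [0,∞)` is locally absolutely continuous with
`F ∈ L^p([0,∞))`, `G ∈ L^r([0,∞))` and the a.e. derivative of `F` satisfies `F' ≤ G` a.e.,
then `F(t) → 0` as `t → ∞`. -/
theorem stmt_1 (p r : ℝ≥0∞) (hp1 : 1 ≤ p) (hptop : p ≠ ⊤) (hr1 : 1 ≤ r)
    (F F' G : ℝ → ℝ)
    (hFnn : ∀ t : ℝ, 0 ≤ t → 0 ≤ F t)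
    (hrep : ∀ t : ℝ, 0 ≤ t → F t = F 0 + ∫ s in (0:ℝ)..t, F' s)
    (hF'int : ∀ T : ℝ, 0 ≤ T → IntegrableOn F' (Icc 0 T))
    (hFp : MemLp F p (volume.restrict (Ici (0:ℝ))))
    (hGr : MemLp G r (volume.restrict (Ici (0:ℝ))))
    (hle : ∀ᵐ t ∂(volume : Measure ℝ), t ∈ Ici (0:ℝ) → F' t ≤ G t) :
    Tendsto F atTop (nhds 0) := by
  have hp0 : p ≠ 0 := by positivity
  set q := p.toReal with hqdef
  have hq1 : 1 ≤ q := by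
    have := ENNReal.toReal_mono hptop hp1
    simpa using this
  have hq0 : 0 < q := lt_of_lt_of_le one_pos hq1
  -- `H = ‖F‖^q` is integrable on `[0,∞)`
  have hH : IntegrableOn (fun x => ‖F x‖ ^ q) (Ici (0:ℝ)) :=
    hFp.integrable_norm_rpow hp0 hptop
  have hHnn : ∀ x, 0 ≤ ‖F x‖ ^ q := fun x => Real.rpow_nonneg (norm_nonneg _) q
  -- G is integrable on bounded intervals in `[0,∞)`
  have hGint : ∀ s t : ℝ, 0 ≤ s → IntegrableOn G (Icc s t) := by
    intro s t hs
    have hsub : Icc s t ⊆ Ici (0:ℝ) := fun x hx => le_trans hs hx.1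
    have h2 : MemLp G r (volume.restrict (Icc s t)) :=
      hGr.mono_measure (Measure.restrict_mono hsub le_rfl)
    haveI : IsFiniteMeasure (volume.restrict (Icc s t)) := by
      constructor
      rw [Measure.restrict_apply_univ]
      exact measure_Icc_lt_top
    exact memLp_one_iff_integrable.mp (h2.mono_exponent hr1)
  -- F' is interval integrable on intervals in `[0,∞)`
  have hII : ∀ a b : ℝ, 0 ≤ a → a ≤ b → IntervalIntegrable F' volume a b := by
    intro a b ha hab
    have h1 : IntegrableOn F' (Icc a b) :=
      (hF'int b (ha.trans hab)).mono_set (Icc_subset_Icc ha le_rfl)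
    have h2 : IntegrableOn F' (uIcc a b) := by rw [uIcc_of_le hab]; exact h1
    exact h2.intervalIntegrable
  -- KEY : integrals of |G| over short intervals far out are small
  have KEY : ∀ ε : ℝ, 0 < ε → ∃ δ : ℝ, 0 < δ ∧ ∀ T₀ : ℝ, ∃ T, T₀ ≤ T ∧ 0 ≤ T ∧
      ∀ s t : ℝ, T ≤ s → s ≤ t → t - s ≤ δ → (∫ x in Ioc s t, |G x|) ≤ ε := by
    intro ε hε
    by_cases hrtop : r = ⊤
    · -- essentially bounded case
      set C := (eLpNormEssSup G (volume.restrict (Ici (0:ℝ)))).toReal with hC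
      have hCtop : eLpNormEssSup G (volume.restrict (Ici (0:ℝ))) ≠ ⊤ := by
        have := hGr.2
        rw [hrtop, eLpNorm_exponent_top] at this
        exact this.ne
      have hC0 : 0 ≤ C := ENNReal.toReal_nonneg
      have hbd : ∀ᵐ x ∂(volume.restrict (Ici (0:ℝ))), ‖G x‖ ≤ C := by
        filter_upwards [ae_le_eLpNormEssSup (f := G) (μ := volume.restrict (Ici (0:ℝ)))]
          with x hx
        have h1 : ((‖G x‖₊ : ℝ≥0∞)).toReal ≤ C := ENNReal.toReal_mono hCtop hx
        simpa using h1
      refine ⟨ε / (C + 1), by positivity, fun T₀ => ⟨max T₀ 0, le_max_left _ _,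
        le_max_right _ _, fun s t hTs hst hts => ?_⟩⟩
      have hs0 : (0:ℝ) ≤ s := le_trans (le_max_right _ _) hTs
      have hsub : Ioc s t ⊆ Ici (0:ℝ) := fun x hx => le_trans hs0 (le_of_lt hx.1)
      have hbd' : ∀ᵐ x ∂(volume.restrict (Ioc s t)), |G x| ≤ C := by
        have h2 := hbd.filter_mono (ae_mono (Measure.restrict_mono hsub le_rfl))
        filter_upwards [h2] with x hx
        simpa [Real.norm_eq_abs] using hx
      have hGabs : IntegrableOn (fun x => |G x|) (Ioc s t) :=
        ((hGint s t hs0).mono_set Ioc_subset_Icc_self).abs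
      calc (∫ x in Ioc s t, |G x|) ≤ ∫ _x in Ioc s t, C :=
            integral_mono_ae hGabs (integrableOn_const measure_Ioc_lt_top.ne) hbd'
        _ = (volume (Ioc s t)).toReal * C := by
            rw [setIntegral_const, smul_eq_mul, measureReal_def]
        _ ≤ (ε / (C + 1)) * C := by
            apply mul_le_mul_of_nonneg_right _ hC0
            rw [Real.volume_Ioc, ENNReal.toReal_ofReal (by linarith)]
            exact hts
        _ ≤ ε := by
            rw [div_mul_eq_mul_div, div_le_iff₀ (by positivity)]
            nlinarith
    · -- `|G|^rr` integrable case
      have hr0 : r ≠ 0 := by positivity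
      set rr := r.toReal with hrrdef
      have hrr1 : 1 ≤ rr := by
        have := ENNReal.toReal_mono hrtop hr1
        simpa using this
      have hK : IntegrableOn (fun x => ‖G x‖ ^ rr) (Ici (0:ℝ)) :=
        hGr.integrable_norm_rpow hr0 hrtop
      have hKnn : ∀ x, 0 ≤ ‖G x‖ ^ rr := fun x => Real.rpow_nonneg (norm_nonneg _) rr
      refine ⟨ε / 2, by positivity, fun T₀ => ?_⟩
      obtain ⟨T, hT1, hT0, hTtail⟩ := tail_small_aux hK hKnn (half_pos hε) T₀
      refine ⟨T, hT1, hT0, fun s t hTs hst hts => ?_⟩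
      have hs0 : (0:ℝ) ≤ s := le_trans hT0 hTs
      have hGabs : IntegrableOn (fun x => |G x|) (Ioc s t) :=
        ((hGint s t hs0).mono_set Ioc_subset_Icc_self).abs
      have hKloc : IntegrableOn (fun x => ‖G x‖ ^ rr) (Ioc s t) :=
        hK.mono_set (fun x hx => le_trans hs0 (le_of_lt hx.1))
      have hmeas : volume (Ioc s t) < ⊤ := measure_Ioc_lt_top
      have hptwise : ∀ x, |G x| ≤ 1 + ‖G x‖ ^ rr := by
        intro x
        rcases le_or_gt (|G x|) 1 with h | h
        · linarith [hKnn x]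
        · have h3 : |G x| ≤ |G x| ^ rr := by
            nth_rewrite 1 [← Real.rpow_one (|G x|)]
            exact Real.rpow_le_rpow_of_exponent_le (le_of_lt h) hrr1
          rw [Real.norm_eq_abs]
          linarith [h3]
      calc (∫ x in Ioc s t, |G x|) ≤ ∫ x in Ioc s t, (1 + ‖G x‖ ^ rr) :=
            setIntegral_mono hGabs ((integrableOn_const hmeas.ne).add hKloc) hptwise
        _ = (volume (Ioc s t)).toReal + ∫ x in Ioc s t, ‖G x‖ ^ rr := by
            rw [integral_add (integrableOn_const (C := (1:ℝ)) hmeas.ne) hKloc]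
            simp [measureReal_def]
        _ ≤ ε / 2 + ε / 2 := by
            gcongr
            · rw [Real.volume_Ioc, ENNReal.toReal_ofReal (by linarith)]
              exact hts
            · calc (∫ x in Ioc s t, ‖G x‖ ^ rr) ≤ ∫ x in Ici T, ‖G x‖ ^ rr := by
                    refine setIntegral_mono_set (hK.mono_set (fun x hx => le_trans hT0 hx))
                      (Eventually.of_forall fun x => hKnn x) ?_
                    exact HasSubset.Subset.eventuallyLE
                      (fun x hx => le_trans hTs (le_of_lt hx.1))
                _ ≤ ε / 2 := le_of_lt hTtail
        _ = ε := by ring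
  -- main argument
  rw [NormedAddCommGroup.tendsto_nhds_zero]
  intro ε hε
  obtain ⟨δ, hδ, hKEY⟩ := KEY (ε / 2) (by positivity)
  have hc : (0:ℝ) < (ε / 2) ^ q * δ := by positivity
  obtain ⟨T₂, _, hT₂0, hT₂tail⟩ := tail_small_aux hH hHnn hc 0
  obtain ⟨T, hTT₂, hT0, hTkey⟩ := hKEY T₂
  filter_upwards [eventually_ge_atTop (T + δ)] with t ht
  have ht0 : (0:ℝ) ≤ t := by linarith
  rw [Real.norm_eq_abs, abs_of_nonneg (hFnn t ht0)]
  by_contra hcon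
  push_neg at hcon
  -- So `F t ≥ ε`; show `F s ≥ ε/2` on `[t-δ, t]`
  have hFs : ∀ s, s ∈ Icc (t - δ) t → ε / 2 ≤ F s := by
    intro s hs
    have hs0 : (0:ℝ) ≤ s := by
      have := hs.1; linarith
    have hTs : T ≤ s := by have := hs.1; linarith
    have hst : s ≤ t := hs.2
    -- interval integrability of G on [s,t]
    have hGII : IntervalIntegrable G volume s t := by
      have h2 : IntegrableOn G (uIcc s t) := by
        rw [uIcc_of_le hst]; exact hGint s t hs0
      exact h2.intervalIntegrable
    -- F t - F s = ∫_s^t F'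
    have hsub : F t - F s = ∫ x in s..t, F' x := by
      rw [hrep t ht0, hrep s hs0]
      rw [add_sub_add_left_eq_sub]
      exact intervalIntegral.integral_interval_sub_left (hII 0 t le_rfl ht0)
        (hII 0 s le_rfl hs0)
    have hae : F' ≤ᵐ[volume.restrict (Icc s t)] G := by
      filter_upwards [ae_restrict_of_ae hle, ae_restrict_mem measurableSet_Icc]
        with x h1 h2
      exact h1 (le_trans hs0 h2.1)
    have hstep1 : (∫ x in s..t, F' x) ≤ ∫ x in s..t, G x :=
      intervalIntegral.integral_mono_ae_restrict hst (hII s t hs0 hst) hGII hae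
    have hstep2 : (∫ x in s..t, G x) ≤ ∫ x in s..t, |G x| :=
      intervalIntegral.integral_mono_on hst hGII hGII.abs (fun x _ => le_abs_self _)
    have hstep3 : (∫ x in s..t, |G x|) = ∫ x in Ioc s t, |G x| :=
      intervalIntegral.integral_of_le hst
    have hstep4 : (∫ x in Ioc s t, |G x|) ≤ ε / 2 :=
      hTkey s t hTs hst (by have := hs.1; linarith)
    have hεt : ε ≤ F t := hcon
    linarith [hsub, hstep1, hstep2, hstep3.le, hstep3.ge, hstep4]
  -- contradiction via the L^p bound
  have hsubIcc : Icc (t - δ) t ⊆ Ici (0:ℝ) := fun x hx => by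
    have := hx.1; simp only [mem_Ici]; linarith
  have h1 : (ε / 2) ^ q * δ ≤ ∫ x in Icc (t - δ) t, ‖F x‖ ^ q := by
    have hconst : ∀ x ∈ Icc (t - δ) t, (ε / 2) ^ q ≤ ‖F x‖ ^ q := by
      intro x hx
      have hx0 : (0:ℝ) ≤ x := hsubIcc hx
      rw [Real.norm_eq_abs, abs_of_nonneg (hFnn x hx0)]
      exact Real.rpow_le_rpow (by positivity) (hFs x hx) (le_of_lt hq0)
    have := setIntegral_ge_of_const_le_real measurableSet_Icc measure_Icc_lt_top.ne hconst
      (hH.mono_set hsubIcc)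
    rwa [measureReal_def, Real.volume_Icc, sub_sub_cancel, ENNReal.toReal_ofReal hδ.le] at this
  have h2 : (∫ x in Icc (t - δ) t, ‖F x‖ ^ q) ≤ ∫ x in Ici T₂, ‖F x‖ ^ q := by
    refine setIntegral_mono_set (hH.mono_set (fun x hx => le_trans hT₂0 hx))
      (Eventually.of_forall fun x => hHnn x) ?_
    refine HasSubset.Subset.eventuallyLE (fun x hx => ?_)
    have := hx.1
    simp only [mem_Ici]
    linarith
  linarith [hT₂tail]
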